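/- Let T > 0 and let δ, ξ, b : [0,T] → ℝ³ and V, ω : [0,T] → ℝ be continuous, with δ continuously differentiable, |b(t)| ≤ 1 for all t, and δ̇(t) = ξ(t) − V(t) b(t) − ω(t) δ(t)^⊥ on [0,T]. Then for every t ∈ [0,T], |δ(t)| ≤ T^{−1/2} (∫₀ᵀ |δ|²)^{1/2} + (∫₀ᵀ ω²)^{1/2} (∫₀ᵀ |δ|²)^{1/2} + T^{1/2} (∫₀ᵀ |ξ|²)^{1/2} + T^{1/2} (∫₀ᵀ V²)^{1/2}. -/

import Mathlib

open Matrix intervalIntegral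

/-- The Euclidean norm on `ℝ³`. -/
noncomputable def norm3 (v : Fin 3 → ℝ) : ℝ := Real.sqrt (v ⬝ᵥ v)

/-- For `a = (a₁,a₂,a₃) ∈ ℝ³`, `a^⊥ := e₁ × a = (0, -a₃, a₂)`. -/
def perp (a : Fin 3 → ℝ) : Fin 3 → ℝ := ![0, -a 2, a 1]

open MeasureTheory Set Real

/-- Cauchy–Schwarz for interval integrals of nonnegative continuous functions. -/
lemma cs_aux {T : ℝ} (hT : 0 ≤ T) {f g : ℝ → ℝ} (hf : ContinuousOn f (Set.Icc 0 T))
    (hg : ContinuousOn g (Set.Icc 0 T)) (hf0 : ∀ x, 0 ≤ f x) (hg0 : ∀ x, 0 ≤ g x) :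
    (∫ t in (0:ℝ)..T, f t * g t)
      ≤ Real.sqrt (∫ t in (0:ℝ)..T, f t ^ 2) * Real.sqrt (∫ t in (0:ℝ)..T, g t ^ 2) := by
  have hμfin : IsFiniteMeasure (volume.restrict (Set.Ioc (0:ℝ) T)) :=
    ⟨by rw [Measure.restrict_apply_univ, Real.volume_Ioc]; exact ENNReal.ofReal_lt_top⟩
  have mem : ∀ {h : ℝ → ℝ}, ContinuousOn h (Set.Icc 0 T) →
      MemLp h (ENNReal.ofReal 2) (volume.restrict (Set.Ioc (0:ℝ) T)) := by
    intro h hc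
    obtain ⟨C, hC⟩ := isCompact_Icc.exists_bound_of_continuousOn hc
    exact MemLp.of_bound
      ((hc.mono Set.Ioc_subset_Icc_self).aestronglyMeasurable measurableSet_Ioc) C
      ((MeasureTheory.ae_restrict_iff' measurableSet_Ioc).2
        (Filter.Eventually.of_forall fun x hx => hC x (Set.Ioc_subset_Icc_self hx)))
  have conj : (2:ℝ).HolderConjugate 2 := Real.holderConjugate_iff.mpr ⟨one_lt_two, by norm_num⟩
  have key := MeasureTheory.integral_mul_le_Lp_mul_Lq_of_nonneg conj
    (Filter.Eventually.of_forall hf0) (Filter.Eventually.of_forall hg0) (mem hf) (mem hg)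
  have e2 : ∀ x : ℝ, x ^ (2:ℝ) = x ^ 2 := fun x => by
    rw [show (2:ℝ) = ((2:ℕ):ℝ) by norm_num, Real.rpow_natCast]
  simp_rw [e2, ← Real.sqrt_eq_rpow] at key
  rw [intervalIntegral.integral_of_le hT, intervalIntegral.integral_of_le hT,
    intervalIntegral.integral_of_le hT]
  exact key

/-- Let `T > 0` and let `δ, ξ, b : [0,T] → ℝ³`, `V, ω : [0,T] → ℝ` be continuous,
with `δ` continuously differentiable (derivative `δ'`), `|b(t)| ≤ 1`, and
`δ̇(t) = ξ(t) − V(t) b(t) − ω(t) δ(t)^⊥` on `[0,T]`. Then for every `t ∈ [0,T]`,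
`|δ(t)| ≤ T^{−1/2}(∫₀ᵀ|δ|²)^{1/2} + (∫₀ᵀ ω²)^{1/2}(∫₀ᵀ|δ|²)^{1/2}
 + T^{1/2}(∫₀ᵀ|ξ|²)^{1/2} + T^{1/2}(∫₀ᵀ V²)^{1/2}`. -/
theorem stmt16 (T : ℝ) (hT : 0 < T) (δ δ' ξ b : ℝ → Fin 3 → ℝ) (V ω : ℝ → ℝ)
    (hξ : ContinuousOn ξ (Set.Icc 0 T)) (hb : ContinuousOn b (Set.Icc 0 T))
    (hV : ContinuousOn V (Set.Icc 0 T)) (hω : ContinuousOn ω (Set.Icc 0 T))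
    (hderiv : ∀ t ∈ Set.Icc 0 T, HasDerivWithinAt δ (δ' t) (Set.Icc 0 T) t)
    (hδ'cont : ContinuousOn δ' (Set.Icc 0 T))
    (hbnorm : ∀ t ∈ Set.Icc 0 T, norm3 (b t) ≤ 1)
    (heq : ∀ t ∈ Set.Icc 0 T, δ' t = ξ t - V t • b t - ω t • perp (δ t)) :
    ∀ t ∈ Set.Icc 0 T,
      norm3 (δ t)
        ≤ Real.sqrt (∫ t in (0:ℝ)..T, norm3 (δ t) ^ 2) / Real.sqrt T
          + Real.sqrt (∫ t in (0:ℝ)..T, (ω t) ^ 2)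
              * Real.sqrt (∫ t in (0:ℝ)..T, norm3 (δ t) ^ 2)
          + Real.sqrt T * Real.sqrt (∫ t in (0:ℝ)..T, norm3 (ξ t) ^ 2)
          + Real.sqrt T * Real.sqrt (∫ t in (0:ℝ)..T, (V t) ^ 2) := by
  intro t ht
  have hT0 : (0:ℝ) ≤ T := hT.le
  set S := Set.Icc (0:ℝ) T with hS
  set L : (Fin 3 → ℝ) ≃L[ℝ] EuclideanSpace ℝ (Fin 3) := (EuclideanSpace.equiv (Fin 3) ℝ).symm
    with hL
  have hnorm : ∀ v : Fin 3 → ℝ, norm3 v = ‖L v‖ := by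
    intro v
    rw [norm3, EuclideanSpace.norm_eq]
    congr 1
    apply Finset.sum_congr rfl
    intro i _
    rw [Real.norm_eq_abs, sq_abs, sq]
    rfl
  have norm3_nonneg : ∀ v : Fin 3 → ℝ, 0 ≤ norm3 v := fun v => Real.sqrt_nonneg _
  have hperp : ∀ a : Fin 3 → ℝ, norm3 (perp a) ≤ norm3 a := by
    intro a
    rw [norm3, norm3]
    apply Real.sqrt_le_sqrt
    simp only [dotProduct, Fin.sum_univ_three, perp, Matrix.cons_val_zero,
      Matrix.cons_val_one, Matrix.head_cons, Matrix.cons_val_two, Matrix.tail_cons]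
    nlinarith [sq_nonneg (a 0)]
  set Δ : ℝ → EuclideanSpace ℝ (Fin 3) := fun u => L (δ u) with hΔ
  set Δ' : ℝ → EuclideanSpace ℝ (Fin 3) := fun u => L (δ' u) with hΔ'
  have hδc : ContinuousOn δ S := fun x hx => (hderiv x hx).continuousWithinAt
  have hΔc : ContinuousOn Δ S := L.continuous.comp_continuousOn hδc
  have hΔ'c : ContinuousOn Δ' S := L.continuous.comp_continuousOn hδ'cont
  have intOf : ∀ {h : ℝ → ℝ}, ContinuousOn h S → IntervalIntegrable h volume 0 T := by
    intro h hc
    apply ContinuousOn.intervalIntegrable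
    rw [Set.uIcc_of_le hT0, ← hS]
    exact hc
  -- continuity of the various scalar functions
  have cnδ : ContinuousOn (fun u => norm3 (δ u)) S := by
    simp_rw [hnorm]; exact hΔc.norm
  have cnξ : ContinuousOn (fun u => norm3 (ξ u)) S := by
    simp_rw [hnorm]; exact (L.continuous.comp_continuousOn hξ).norm
  have cnΔ' : ContinuousOn (fun u => ‖Δ' u‖) S := hΔ'c.norm
  have cV : ContinuousOn (fun u => |V u|) S := hV.abs
  have cω : ContinuousOn (fun u => |ω u|) S := hω.abs
  -- Step 1: for all s ∈ S, ‖Δ t‖ ≤ ‖Δ s‖ + ∫₀ᵀ ‖Δ'‖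
  have key1 : ∀ s ∈ S, ‖Δ t‖ ≤ ‖Δ s‖ + ∫ u in (0:ℝ)..T, ‖Δ' u‖ := by
    intro s hs
    have husub : Set.uIcc s t ⊆ S := Set.uIcc_subset_Icc hs ht
    have hftc : (∫ u in s..t, Δ' u) = Δ t - Δ s := by
      apply intervalIntegral.integral_eq_sub_of_hasDeriv_right (hΔc.mono husub)
      · intro x hx
        have hx0 : (0:ℝ) < x := lt_of_le_of_lt (le_min hs.1 ht.1) hx.1
        have hxT : x < T := lt_of_lt_of_le hx.2 (max_le hs.2 ht.2)
        have h := (hderiv x ⟨hx0.le, hxT.le⟩).hasDerivAt (Icc_mem_nhds hx0 hxT)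
        exact (L.toContinuousLinearMap.hasFDerivAt.comp_hasDerivAt x h).hasDerivWithinAt
      · exact (hΔ'c.mono husub).intervalIntegrable
    have h2 : ‖∫ u in s..t, Δ' u‖ ≤ |∫ u in s..t, ‖Δ' u‖| :=
      intervalIntegral.norm_integral_le_abs_integral_norm
    have hsub : Set.uIoc s t ⊆ Set.uIoc 0 T := by
      rw [Set.uIoc, Set.uIoc]
      exact Set.Ioc_subset_Ioc (le_trans (min_le_left 0 T) (le_min hs.1 ht.1))
        (le_trans (max_le hs.2 ht.2) (le_max_right 0 T))
    have h3 : |∫ u in s..t, ‖Δ' u‖| ≤ |∫ u in (0:ℝ)..T, ‖Δ' u‖| :=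
      intervalIntegral.abs_integral_mono_interval hsub
        (Filter.Eventually.of_forall fun x => norm_nonneg _) (intOf cnΔ')
    have h4 : |∫ u in (0:ℝ)..T, ‖Δ' u‖| = ∫ u in (0:ℝ)..T, ‖Δ' u‖ :=
      abs_of_nonneg (intervalIntegral.integral_nonneg hT0 fun u _ => norm_nonneg _)
    have h5 := norm_sub_norm_le (Δ t) (Δ s)
    rw [← hftc] at h5
    linarith [h2, h3.trans_eq h4]
  -- Step 2: average over s
  have key2 : T * ‖Δ t‖ ≤ (∫ s in (0:ℝ)..T, norm3 (δ s)) + T * ∫ u in (0:ℝ)..T, ‖Δ' u‖ := by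
    have hmono : (∫ s in (0:ℝ)..T, ‖Δ t‖)
        ≤ ∫ s in (0:ℝ)..T, (norm3 (δ s) + ∫ u in (0:ℝ)..T, ‖Δ' u‖) := by
      apply intervalIntegral.integral_mono_on hT0 intervalIntegrable_const
      · exact (intOf cnδ).add intervalIntegrable_const
      · intro s hs
        rw [hnorm]
        exact key1 s hs
    rw [intervalIntegral.integral_add (intOf cnδ) intervalIntegrable_const,
      intervalIntegral.integral_const, intervalIntegral.integral_const] at hmono
    simp only [sub_zero, smul_eq_mul] at hmono
    linarith
  -- Step 3: pointwise bound on ‖Δ' u‖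
  have hptw : ∀ u ∈ S, ‖Δ' u‖ ≤ norm3 (ξ u) + |V u| + |ω u| * norm3 (δ u) := by
    intro u hu
    have he : Δ' u = L (ξ u) - V u • L (b u) - ω u • L (perp (δ u)) := by
      show L (δ' u) = _
      rw [heq u hu]
      simp [map_sub, _root_.map_smul]
    rw [he]
    have t1 : ‖L (ξ u) - V u • L (b u) - ω u • L (perp (δ u))‖
        ≤ ‖L (ξ u)‖ + ‖V u • L (b u)‖ + ‖ω u • L (perp (δ u))‖ := by
      calc ‖L (ξ u) - V u • L (b u) - ω u • L (perp (δ u))‖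
          ≤ ‖L (ξ u) - V u • L (b u)‖ + ‖ω u • L (perp (δ u))‖ := norm_sub_le _ _
        _ ≤ ‖L (ξ u)‖ + ‖V u • L (b u)‖ + ‖ω u • L (perp (δ u))‖ := by
            have := norm_sub_le (L (ξ u)) (V u • L (b u)); linarith
    rw [norm_smul, norm_smul, Real.norm_eq_abs, Real.norm_eq_abs] at t1
    have hb1 : ‖L (b u)‖ ≤ 1 := by rw [← hnorm]; exact hbnorm u hu
    have hp1 : ‖L (perp (δ u))‖ ≤ norm3 (δ u) := by rw [← hnorm]; exact hperp (δ u)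
    have t2 : |V u| * ‖L (b u)‖ ≤ |V u| := by
      calc |V u| * ‖L (b u)‖ ≤ |V u| * 1 := by
            exact mul_le_mul_of_nonneg_left hb1 (abs_nonneg _)
        _ = |V u| := mul_one _
    have t3 : |ω u| * ‖L (perp (δ u))‖ ≤ |ω u| * norm3 (δ u) :=
      mul_le_mul_of_nonneg_left hp1 (abs_nonneg _)
    rw [hnorm (ξ u)]
    linarith
  -- Step 4: integrate the pointwise bound
  have hint3 : (∫ u in (0:ℝ)..T, ‖Δ' u‖)
      ≤ (∫ u in (0:ℝ)..T, norm3 (ξ u)) + (∫ u in (0:ℝ)..T, |V u|)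
        + ∫ u in (0:ℝ)..T, |ω u| * norm3 (δ u) := by
    have hmono := intervalIntegral.integral_mono_on hT0 (intOf cnΔ')
      (((intOf cnξ).add (intOf cV)).add (intOf (cω.mul cnδ))) hptw
    rw [intervalIntegral.integral_add ((intOf cnξ).add (intOf cV)) (intOf (cω.mul cnδ)),
      intervalIntegral.integral_add (intOf cnξ) (intOf cV)] at hmono
    simp only [Pi.mul_apply] at hmono
    linarith
  -- Cauchy-Schwarz applications
  have c1 : (∫ s in (0:ℝ)..T, norm3 (δ s))
      ≤ Real.sqrt T * Real.sqrt (∫ s in (0:ℝ)..T, norm3 (δ s) ^ 2) := by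
    have := cs_aux hT0 (continuous_const.continuousOn (s := S)) cnδ
      (fun _ => zero_le_one) (fun x => norm3_nonneg _)
    simp only [one_mul, one_pow] at this
    rwa [intervalIntegral.integral_const, sub_zero, smul_eq_mul, mul_one] at this
  have c2 : (∫ u in (0:ℝ)..T, norm3 (ξ u))
      ≤ Real.sqrt T * Real.sqrt (∫ u in (0:ℝ)..T, norm3 (ξ u) ^ 2) := by
    have := cs_aux hT0 (continuous_const.continuousOn (s := S)) cnξ
      (fun _ => zero_le_one) (fun x => norm3_nonneg _)
    simp only [one_mul, one_pow] at this
    rwa [intervalIntegral.integral_const, sub_zero, smul_eq_mul, mul_one] at this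
  have c3 : (∫ u in (0:ℝ)..T, |V u|)
      ≤ Real.sqrt T * Real.sqrt (∫ u in (0:ℝ)..T, (V u) ^ 2) := by
    have := cs_aux hT0 (continuous_const.continuousOn (s := S)) cV
      (fun _ => zero_le_one) (fun x => abs_nonneg _)
    simp only [one_mul, one_pow, sq_abs] at this
    rwa [intervalIntegral.integral_const, sub_zero, smul_eq_mul, mul_one] at this
  have c4 : (∫ u in (0:ℝ)..T, |ω u| * norm3 (δ u))
      ≤ Real.sqrt (∫ u in (0:ℝ)..T, (ω u) ^ 2)
        * Real.sqrt (∫ u in (0:ℝ)..T, norm3 (δ u) ^ 2) := by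
    have := cs_aux hT0 cω cnδ (fun x => abs_nonneg _) (fun x => norm3_nonneg _)
    simpa only [sq_abs] using this
  -- Assemble
  set I := Real.sqrt (∫ u in (0:ℝ)..T, norm3 (δ u) ^ 2) with hI
  set W := Real.sqrt (∫ u in (0:ℝ)..T, (ω u) ^ 2) with hW
  set X := Real.sqrt (∫ u in (0:ℝ)..T, norm3 (ξ u) ^ 2) with hX
  set Y := Real.sqrt (∫ u in (0:ℝ)..T, (V u) ^ 2) with hY
  have hsT : (0:ℝ) < Real.sqrt T := Real.sqrt_pos.2 hT
  have hTs : Real.sqrt T * Real.sqrt T = T := Real.mul_self_sqrt hT0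
  rw [hnorm (δ t)]
  have hbig : T * ‖Δ t‖ ≤ Real.sqrt T * I + T * (W * I) + T * (Real.sqrt T * X)
      + T * (Real.sqrt T * Y) := by nlinarith [key2, hint3, c1, c2, c3, c4]
  have hdiv : T * (I / Real.sqrt T) = Real.sqrt T * I := by
    rw [mul_comm, div_mul_eq_mul_div, div_eq_iff hsT.ne']
    linear_combination I * hTs.symm
  have : T * ‖L (δ t)‖ ≤ T * (I / Real.sqrt T + W * I + Real.sqrt T * X + Real.sqrt T * Y) := by
    rw [mul_add, mul_add, mul_add, hdiv]
    exact hbig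
  exact le_of_mul_le_mul_left this hT
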